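/- Let ζ ∈ ℂ be a primitive cube root of unity and let g₃, a, b, c, A, B, C ∈ ℂ satisfy A² = 4a³ − g₃, B² = 4b³ − g₃, C² = 4c³ − g₃. Then the product of the three determinants det[[1, a, A], [1, b, B], [1, c, C]] · det[[1, a, A], [1, ζb, B], [1, ζ²c, C]] · det[[1, a, A], [1, ζ²b, B], [1, ζc, C]] equals (1/4)·(A − C)·(B − C)·(B − A)·(AB + BC + CA + 3g₃ − 12abc). -/

import Mathlib

set_option maxRecDepth 8000
set_option maxHeartbeats 1600000


/-- the algebraic identity underlying the product of three
Frobenius–Stickelberger determinants in the equianharmonic case `g₂ = 0`. -/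
theorem frobenius_stickelberger_determinant_product
    (ζ : ℂ) (hζ : IsPrimitiveRoot ζ 3)
    (g₃ a b c A B C : ℂ)
    (hA : A ^ 2 = 4 * a ^ 3 - g₃)
    (hB : B ^ 2 = 4 * b ^ 3 - g₃)
    (hC : C ^ 2 = 4 * c ^ 3 - g₃) :
    Matrix.det !![1, a, A; 1, b, B; 1, c, C] *
        Matrix.det !![1, a, A; 1, ζ * b, B; 1, ζ ^ 2 * c, C] *
        Matrix.det !![1, a, A; 1, ζ ^ 2 * b, B; 1, ζ * c, C]
      = (1 / 4) * (A - C) * (B - C) * (B - A) *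
          (A * B + B * C + C * A + 3 * g₃ - 12 * a * b * c) := by
  have h3 : ζ ^ 3 = 1 := hζ.pow_eq_one
  have hne : ζ - 1 ≠ 0 := sub_ne_zero.mpr (hζ.ne_one (by norm_num))
  have hz : ζ ^ 2 + ζ + 1 = 0 := by
    have : (ζ - 1) * (ζ ^ 2 + ζ + 1) = 0 := by linear_combination h3
    exact (mul_eq_zero.mp this).resolve_left hne
  rw [Matrix.det_fin_three, Matrix.det_fin_three, Matrix.det_fin_three]
  norm_num [Matrix.vecHead, Matrix.vecTail, Matrix.cons_val_zero, Matrix.cons_val_one, Matrix.cons_val_two, Matrix.head_cons, Matrix.tail_cons]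
  linear_combination ((1:ℂ)*c^3*B^3 + (-3:ℂ)*c^3*A*B^2 + (3:ℂ)*c^3*A^2*B + (-1:ℂ)*c^3*A^3 + (-1:ℂ)*b^3*C^3 + (3:ℂ)*b^3*A*C^2 + (-3:ℂ)*b^3*A^2*C + (1:ℂ)*b^3*A^3 + (3:ℂ)*a*b*c*B*C^2 + (-3:ℂ)*a*b*c*B^2*C + (-3:ℂ)*a*b*c*A*C^2 + (3:ℂ)*a*b*c*A*B^2 + (3:ℂ)*a*b*c*A^2*C + (-3:ℂ)*a*b*c*A^2*B + (-1:ℂ)*a^2*c*B*C^2 + (2:ℂ)*a^2*c*B^2*C + (-1:ℂ)*a^2*c*B^3 + (1:ℂ)*a^2*c*A*C^2 + (-2:ℂ)*a^2*c*A*B*C + (1:ℂ)*a^2*c*A*B^2 + (1:ℂ)*a^2*b*C^3 + (-2:ℂ)*a^2*b*B*C^2 + (1:ℂ)*a^2*b*B^2*C + (-1:ℂ)*a^2*b*A*C^2 + (2:ℂ)*a^2*b*A*B*C + (-1:ℂ)*a^2*b*A*B^2 + (-1:ℂ)*ζ*c^3*B^3 + (3:ℂ)*ζ*c^3*A*B^2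 + (-3:ℂ)*ζ*c^3*A^2*B + (1:ℂ)*ζ*c^3*A^3 + (1:ℂ)*ζ*b^3*C^3 + (-3:ℂ)*ζ*b^3*A*C^2 + (3:ℂ)*ζ*b^3*A^2*C + (-1:ℂ)*ζ*b^3*A^3 + (-1:ℂ)*ζ*a*c^2*B^2*C + (1:ℂ)*ζ*a*c^2*B^3 + (2:ℂ)*ζ*a*c^2*A*B*C + (-2:ℂ)*ζ*a*c^2*A*B^2 + (-1:ℂ)*ζ*a*c^2*A^2*C + (1:ℂ)*ζ*a*c^2*A^2*B + (-1:ℂ)*ζ*a*b*c*B*C^2 + (1:ℂ)*ζ*a*b*c*B^2*C + (1:ℂ)*ζ*a*b*c*A*C^2 + (-1:ℂ)*ζ*a*b*c*A*B^2 + (-1:ℂ)*ζ*a*b*c*A^2*C + (1:ℂ)*ζ*a*b*c*A^2*B + (-1:ℂ)*ζ*a*b^2*C^3 + (1:ℂ)*ζ*a*b^2*B*C^2 + (2:ℂ)*ζ*a*b^2*A*C^2 + (-2:ℂ)*ζ*a*b^2*A*B*C + (-1:ℂ)*ζ*a*b^2*A^2*C + (1:ℂ)*ζ*a*b^2*A^2*B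 + (1:ℂ)*ζ^2*b*c^2*B^2*C + (-2:ℂ)*ζ^2*b*c^2*A*B*C + (-1:ℂ)*ζ^2*b*c^2*A*B^2 + (1:ℂ)*ζ^2*b*c^2*A^2*C + (2:ℂ)*ζ^2*b*c^2*A^2*B + (-1:ℂ)*ζ^2*b*c^2*A^3 + (-1:ℂ)*ζ^2*b^2*c*B*C^2 + (1:ℂ)*ζ^2*b^2*c*A*C^2 + (2:ℂ)*ζ^2*b^2*c*A*B*C + (-2:ℂ)*ζ^2*b^2*c*A^2*C + (-1:ℂ)*ζ^2*b^2*c*A^2*B + (1:ℂ)*ζ^2*b^2*c*A^3 + (1:ℂ)*ζ^2*a*b*c*B*C^2 + (-1:ℂ)*ζ^2*a*b*c*B^2*C + (-1:ℂ)*ζ^2*a*b*c*A*C^2 + (1:ℂ)*ζ^2*a*b*c*A*B^2 + (1:ℂ)*ζ^2*a*b*c*A^2*C + (-1:ℂ)*ζ^2*a*b*c*A^2*B) * hz + ((1/4:ℂ)*C^3 + (-1/4:ℂ)*B^3 + (-1/4:ℂ)*A*C^2 + (1/4:ℂ)*A*B^2 + (-3:ℂ)*c^3*B + (1:ℂ)*c^3*A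 + (3:ℂ)*b^3*C + (-1:ℂ)*b^3*A + (-3/4:ℂ)*g₃*C + (3/4:ℂ)*g₃*B) * hA + ((-1/4:ℂ)*C^3 + (1/4:ℂ)*B*C^2 + (-1:ℂ)*c^3*B + (3:ℂ)*c^3*A + (-3:ℂ)*a^3*C + (1:ℂ)*a^3*A + (3/4:ℂ)*g₃*C + (1/4:ℂ)*g₃*B + (-1:ℂ)*g₃*A) * hB + ((1:ℂ)*b^3*B + (-3:ℂ)*b^3*A + (3:ℂ)*a^3*B + (-1:ℂ)*a^3*A + (-1:ℂ)*g₃*B + (1:ℂ)*g₃*A) * hC
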